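/- Let Ω' ⊆ [n]×[n] be an index set with at most s elements in every row and at most s elements in every column (i.e., for each i, #{j : (i,j) ∈ Ω'} ≤ s, and for each j, #{i : (i,j) ∈ Ω'} ≤ s). Then for all A, B ∈ ℝ^{n×r}: ‖P_{Ω'}(ABᵀ)‖_F² ≤ s · min{ ‖A‖_F²·‖B‖²_{2,∞}, ‖A‖²_{2,∞}·‖B‖_F² }. -/
import Mathlib


open Matrix MeasureTheory
open scoped Classical

noncomputable section

/-- Euclidean norm of a finitely-indexed real vector. -/
def vecNorm {n : Type*} [Fintype n] (v : n → ℝ) : ℝ :=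
  Real.sqrt (∑ j, (v j) ^ 2)

/-- Spectral norm (ℓ₂ operator norm) of a real matrix. -/
def specNorm {m n : Type*} [Fintype m] [Fintype n] (A : Matrix m n ℝ) : ℝ :=
  sSup {c : ℝ | ∃ x : n → ℝ, vecNorm x ≤ 1 ∧ c = vecNorm (A.mulVec x)}

/-- Frobenius norm of a real matrix. -/
def frobNorm {m n : Type*} [Fintype m] [Fintype n] (A : Matrix m n ℝ) : ℝ :=
  Real.sqrt (∑ i, ∑ j, (A i j) ^ 2)

/-- Entrywise maximum norm ‖·‖_∞ of a real matrix. -/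
def maxNorm {m n : Type*} [Fintype m] [Fintype n] (A : Matrix m n ℝ) : ℝ :=
  ⨆ i, ⨆ j, |A i j|

/-- Two-to-infinity norm ‖·‖_{2,∞}: maximum Euclidean norm of a row. -/
def twoInfNorm {m n : Type*} [Fintype m] [Fintype n] (A : Matrix m n ℝ) : ℝ :=
  ⨆ i, vecNorm (fun j => A i j)

/-- Projection onto the entries indexed by `Ω'`. -/
def projS {n : ℕ} (Ω' : Set (Fin n × Fin n)) (Z : Matrix (Fin n) (Fin n) ℝ) :
    Matrix (Fin n) (Fin n) ℝ :=
  Matrix.of fun i j => if (i, j) ∈ Ω' then Z i j else 0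

lemma vecNorm_nonneg' {n : Type*} [Fintype n] (v : n → ℝ) : 0 ≤ vecNorm v :=
  Real.sqrt_nonneg _

lemma twoInfNorm_nonneg' {m n : Type*} [Fintype m] [Fintype n] (A : Matrix m n ℝ) :
    0 ≤ twoInfNorm A := by
  rcases isEmpty_or_nonempty m with h | h
  · simp [twoInfNorm, Real.iSup_of_isEmpty]
  · exact le_ciSup_of_le (Set.Finite.bddAbove (Set.finite_range _))
      (Classical.arbitrary m) (vecNorm_nonneg' _)

lemma rowsq_le' {m n : Type*} [Fintype m] [Fintype n] (A : Matrix m n ℝ) (i : m) :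
    ∑ k, (A i k) ^ 2 ≤ twoInfNorm A ^ 2 := by
  have h1 : vecNorm (fun k => A i k) ≤ twoInfNorm A := by
    unfold twoInfNorm
    exact le_ciSup (f := fun i => vecNorm (fun j => A i j))
      (Set.Finite.bddAbove (Set.finite_range _)) i
  have h2 : ∑ k, (A i k) ^ 2 = (vecNorm (fun k => A i k)) ^ 2 := by
    rw [vecNorm, Real.sq_sqrt (by positivity)]
  rw [h2]
  exact pow_le_pow_left₀ (vecNorm_nonneg' _) h1 2

lemma count_eq' {n : ℕ} (Ω : Set (Fin n × Fin n)) (i : Fin n) :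
    ∑ j : Fin n, (if (i, j) ∈ Ω then (1 : ℝ) else 0)
      = (({j : Fin n | (i, j) ∈ Ω}.ncard : ℝ)) := by
  rw [Set.ncard_eq_toFinset_card', Set.toFinset_setOf]
  rw [Finset.sum_boole]

lemma aux14 {n r : ℕ} (Ω : Set (Fin n × Fin n)) (s : ℝ)
    (hrow : ∀ i : Fin n, (({j : Fin n | (i, j) ∈ Ω}.ncard : ℝ)) ≤ s)
    (A B : Matrix (Fin n) (Fin r) ℝ) :
    ∑ i, ∑ j, (projS Ω (A * Bᵀ) i j) ^ 2
      ≤ s * ((∑ i, ∑ k, (A i k) ^ 2) * twoInfNorm B ^ 2) := by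
  rcases isEmpty_or_nonempty (Fin n) with h | h
  · simp
  have hs0 : 0 ≤ s :=
    le_trans (by positivity) (hrow (Classical.arbitrary _))
  have hG : (0:ℝ) ≤ twoInfNorm B ^ 2 := by positivity
  have step1 : ∀ i j, (projS Ω (A * Bᵀ) i j) ^ 2
      ≤ (if (i, j) ∈ Ω then (∑ k, (A i k) ^ 2) * (∑ k, (B j k) ^ 2) else 0) := by
    intro i j
    simp only [projS, Matrix.of_apply]
    split
    · have := Finset.sum_mul_sq_le_sq_mul_sq Finset.univ (fun k => A i k) (fun k => B j k)
      simpa [Matrix.mul_apply, Matrix.transpose_apply] using this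
    · simp
  calc ∑ i, ∑ j, (projS Ω (A * Bᵀ) i j) ^ 2
      ≤ ∑ i, ∑ j, (if (i, j) ∈ Ω then (∑ k, (A i k) ^ 2) * (∑ k, (B j k) ^ 2) else 0) := by
        refine Finset.sum_le_sum fun i _ => Finset.sum_le_sum fun j _ => step1 i j
    _ ≤ ∑ i, ∑ j, (if (i, j) ∈ Ω then (∑ k, (A i k) ^ 2) * twoInfNorm B ^ 2 else 0) := by
        refine Finset.sum_le_sum fun i _ => Finset.sum_le_sum fun j _ => ?_
        split
        · exact mul_le_mul_of_nonneg_left (rowsq_le' B j) (by positivity)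
        · exact le_rfl
    _ = ∑ i, (∑ j, (if (i, j) ∈ Ω then (1:ℝ) else 0)) * ((∑ k, (A i k) ^ 2) * twoInfNorm B ^ 2) := by
        refine Finset.sum_congr rfl fun i _ => ?_
        simp only [Finset.sum_mul]
        refine Finset.sum_congr rfl fun j _ => ?_
        split <;> simp
    _ ≤ ∑ i, s * ((∑ k, (A i k) ^ 2) * twoInfNorm B ^ 2) := by
        refine Finset.sum_le_sum fun i _ => ?_
        refine mul_le_mul_of_nonneg_right ?_ (by positivity)
        rw [count_eq']; exact hrow i
    _ = s * ((∑ i, ∑ k, (A i k) ^ 2) * twoInfNorm B ^ 2) := by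
        simp only [Finset.sum_mul, Finset.mul_sum]

/-- If the index set `Ω'` has at most `s` elements in every row and every column, then
`‖P_{Ω'}(ABᵀ)‖_F² ≤ s · min{‖A‖_F²·‖B‖²_{2,∞}, ‖A‖²_{2,∞}·‖B‖_F²}`. -/
theorem stmt14 {n r : ℕ} (Ω' : Set (Fin n × Fin n)) (s : ℝ)
    (hrow : ∀ i : Fin n, (({j : Fin n | (i, j) ∈ Ω'}.ncard : ℝ)) ≤ s)
    (hcol : ∀ j : Fin n, (({i : Fin n | (i, j) ∈ Ω'}.ncard : ℝ)) ≤ s)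
    (A B : Matrix (Fin n) (Fin r) ℝ) :
    frobNorm (projS Ω' (A * Bᵀ)) ^ 2 ≤
      s * min (frobNorm A ^ 2 * twoInfNorm B ^ 2) (twoInfNorm A ^ 2 * frobNorm B ^ 2) := by
  have hLHS : frobNorm (projS Ω' (A * Bᵀ)) ^ 2 = ∑ i, ∑ j, (projS Ω' (A * Bᵀ) i j) ^ 2 := by
    rw [frobNorm, Real.sq_sqrt (by positivity)]
  have hFA : frobNorm A ^ 2 = ∑ i, ∑ k, (A i k) ^ 2 := by
    rw [frobNorm, Real.sq_sqrt (by positivity)]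
  have hFB : frobNorm B ^ 2 = ∑ i, ∑ k, (B i k) ^ 2 := by
    rw [frobNorm, Real.sq_sqrt (by positivity)]
  rcases isEmpty_or_nonempty (Fin n) with h | h
  · have hA0 : frobNorm A ^ 2 = 0 := by rw [hFA]; simp
    have hB0 : frobNorm B ^ 2 = 0 := by rw [hFB]; simp
    rw [hLHS, hA0, hB0]
    simp
  have hs0 : 0 ≤ s :=
    le_trans (by positivity) (hrow (Classical.arbitrary _))
  rw [mul_min_of_nonneg _ _ hs0]
  refine le_min ?_ ?_
  · rw [hLHS, hFA]
    exact aux14 Ω' s hrow A B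
  · -- column version: apply aux14 to the swapped set
    set Ω₂ : Set (Fin n × Fin n) := {p | (p.2, p.1) ∈ Ω'} with hΩ₂
    have hrow₂ : ∀ i : Fin n, (({j : Fin n | (i, j) ∈ Ω₂}.ncard : ℝ)) ≤ s := fun i => hcol i
    have key := aux14 Ω₂ s hrow₂ B A
    have hswap : ∑ i, ∑ j, (projS Ω' (A * Bᵀ) i j) ^ 2
        = ∑ i, ∑ j, (projS Ω₂ (B * Aᵀ) i j) ^ 2 := by
      rw [Finset.sum_comm]
      refine Finset.sum_congr rfl fun i _ => Finset.sum_congr rfl fun j _ => ?_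
      simp only [projS, Matrix.of_apply, Matrix.mul_apply, Matrix.transpose_apply, hΩ₂,
        Set.mem_setOf_eq]
      congr 2
      exact Finset.sum_congr rfl fun k _ => mul_comm _ _
    rw [hLHS, hswap, hFB]
    calc ∑ i, ∑ j, (projS Ω₂ (B * Aᵀ) i j) ^ 2
        ≤ s * ((∑ i, ∑ k, (B i k) ^ 2) * twoInfNorm A ^ 2) := key
      _ = s * (twoInfNorm A ^ 2 * ∑ i, ∑ k, (B i k) ^ 2) := by ring
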